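/- Let Φ : ℝⁿ × ℝⁿ → ℝᵖ be a vector-valued symmetric bilinear form with components Φ^α_{ij} (1 ≤ i,j ≤ n, 1 ≤ α ≤ p) satisfying the traceless condition ∑_k Φ^α_{kk} = 0 for each α. Then |Φ|² = ∑_{α,i,j} (Φ^α_{ij})² ≥ (n/(n-1)) ∑_α ∑_{j=1}^n (Φ^α_{1j})². -/
import Mathlib

open Finset

lemma aux0 (n : ℕ) (hn : 2 ≤ n) (M : Fin n → Fin n → ℝ)
    (hsym : ∀ i j, M i j = M j i) (htr : ∑ k, M k k = 0) :
    ((n : ℝ) / (n - 1)) * ∑ j, (M ⟨0, by omega⟩ j) ^ 2 ≤ ∑ i, ∑ j, (M i j) ^ 2 := by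
  set z : Fin n := ⟨0, by omega⟩ with hz
  set S : Finset (Fin n) := Finset.univ.erase z with hS
  have hcard : (S.card : ℝ) = (n : ℝ) - 1 := by
    have : S.card = n - 1 := by
      simp [hS, Finset.card_erase_of_mem]
    rw [this]
    have : (1:ℕ) ≤ n := by omega
    push_cast [Nat.cast_sub this]
    ring
  have hT : ∑ i ∈ S, M i i = - M z z := by
    have := Finset.add_sum_erase Finset.univ (fun i => M i i) (Finset.mem_univ z)
    rw [htr] at this
    linarith [this]
  have hCS : (M z z) ^ 2 ≤ ((n:ℝ) - 1) * ∑ i ∈ S, (M i i) ^ 2 := by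
    have := sq_sum_le_card_mul_sum_sq (s := S) (f := fun i => M i i)
    rw [hT] at this
    rw [← hcard]
    simpa using this
  -- split total sum
  have hsplit : ∑ i, ∑ j, (M i j) ^ 2
      = (∑ j, (M z j) ^ 2) + ∑ i ∈ S, ∑ j, (M i j) ^ 2 := by
    rw [← Finset.add_sum_erase Finset.univ (fun i => ∑ j, (M i j)^2) (Finset.mem_univ z)]
  have hrow : ∀ i ∈ S, (M i z)^2 + (M i i)^2 ≤ ∑ j, (M i j) ^ 2 := by
    intro i hi
    have hiz : i ≠ z := Finset.ne_of_mem_erase hi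
    rw [← Finset.add_sum_erase Finset.univ (fun j => (M i j)^2) (Finset.mem_univ z)]
    have : (M i i)^2 ≤ ∑ j ∈ Finset.univ.erase z, (M i j)^2 :=
      Finset.single_le_sum (f := fun j => (M i j)^2) (fun j _ => sq_nonneg _)
        (Finset.mem_erase.mpr ⟨hiz, Finset.mem_univ i⟩)
    linarith
  have hlow : ∑ i ∈ S, (M i z)^2 + ∑ i ∈ S, (M i i)^2 ≤ ∑ i ∈ S, ∑ j, (M i j)^2 := by
    rw [← Finset.sum_add_distrib]
    exact Finset.sum_le_sum hrow
  have hsymcol : ∑ i ∈ S, (M i z)^2 = ∑ j ∈ S, (M z j)^2 := by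
    apply Finset.sum_congr rfl
    intro i _
    rw [hsym]
  have hrowsplit : ∑ j, (M z j)^2 = (M z z)^2 + ∑ j ∈ S, (M z j)^2 := by
    rw [← Finset.add_sum_erase Finset.univ (fun j => (M z j)^2) (Finset.mem_univ z)]
  -- now combine
  set T := ∑ j ∈ S, (M z j)^2 with hTdef
  have hTnn : 0 ≤ T := Finset.sum_nonneg (fun j _ => sq_nonneg _)
  have hn1 : (1:ℝ) ≤ (n:ℝ) - 1 := by
    have : (2:ℝ) ≤ (n:ℝ) := by exact_mod_cast hn
    linarith
  have hnle : (n:ℝ) / ((n:ℝ) - 1) ≤ 2 := by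
    rw [div_le_iff₀ (by linarith)]
    have : (2:ℝ) ≤ (n:ℝ) := by exact_mod_cast hn
    linarith
  have hD : (n:ℝ) / ((n:ℝ) - 1) * (M z z)^2 ≤ (M z z)^2 + (M z z)^2 / ((n:ℝ)-1) := by
    have : (n:ℝ) / ((n:ℝ) - 1) * (M z z)^2 = (M z z)^2 + (M z z)^2 / ((n:ℝ)-1) := by
      field_simp
      ring
    linarith [this.le]
  have hC : (M z z)^2 / ((n:ℝ)-1) ≤ ∑ i ∈ S, (M i i)^2 := by
    rw [div_le_iff₀ (by linarith)]
    linarith [hCS]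
  rw [hsplit, hrowsplit]
  have goal2 : (n:ℝ) / ((n:ℝ)-1) * ((M z z)^2 + T) ≤ (M z z)^2 + T + (T + ∑ i ∈ S, (M i i)^2) := by
    have h2T : (n:ℝ) / ((n:ℝ)-1) * T ≤ 2 * T :=
      mul_le_mul_of_nonneg_right hnle hTnn
    have := hD
    have := hC
    nlinarith
  calc (n:ℝ) / ((n:ℝ)-1) * ((M z z)^2 + T)
      ≤ (M z z)^2 + T + (T + ∑ i ∈ S, (M i i)^2) := goal2
    _ ≤ (M z z)^2 + T + ∑ i ∈ S, ∑ j, (M i j)^2 := by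
        rw [← hsymcol] at *
        linarith [hlow]

theorem stmt0 (n p : ℕ) (hn : 2 ≤ n) (hp : 1 ≤ p)
    (Φ : Fin p → Fin n → Fin n → ℝ)
    (hsym : ∀ α i j, Φ α i j = Φ α j i)
    (htr : ∀ α, ∑ k, Φ α k k = 0) :
    (∑ α, ∑ i, ∑ j, (Φ α i j) ^ 2) ≥
      ((n : ℝ) / (n - 1)) * ∑ α, ∑ j, (Φ α ⟨0, by omega⟩ j) ^ 2 := by
  rw [Finset.mul_sum]
  exact Finset.sum_le_sum (fun α _ => aux0 n hn (Φ α) (hsym α) (htr α))
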